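/- For n ≥ 3, the cost function on an n-element set defined by c(∅)=0, c(S)=1 if 1 ≤ |S| ≤ 2, and c(S)=3 if |S| ≥ 3, is 2-average decreasing (for all nonempty S ⊆ T, 2·c(S)/|S| ≥ c(T)/|T|) but is not subadditive. -/
import Mathlib


/-- The threshold cost function is 2-average decreasing but not subadditive. -/
theorem two_avg_decreasing_not_subadditive (n : ℕ) (hn : 3 ≤ n) (c : Finset (Fin n) → ℝ)
    (h0 : c ∅ = 0)
    (h12 : ∀ S : Finset (Fin n), 1 ≤ S.card → S.card ≤ 2 → c S = 1)
    (h3 : ∀ S : Finset (Fin n), 3 ≤ S.card → c S = 3) :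
    (∀ S T : Finset (Fin n), S ⊆ T → S.Nonempty → c T / T.card ≤ 2 * (c S / S.card)) ∧
    ¬ (∀ S T : Finset (Fin n), c (S ∪ T) ≤ c S + c T) := by
  constructor
  · intro S T hST hS
    have hS1 : 1 ≤ S.card := Finset.one_le_card.mpr hS
    have hle : S.card ≤ T.card := Finset.card_le_card hST
    have hSpos : (0 : ℝ) < S.card := by positivity
    have hTpos : (0 : ℝ) < T.card := by
      have : 1 ≤ T.card := le_trans hS1 hle
      positivity
    have hcast : (S.card : ℝ) ≤ T.card := by exact_mod_cast hle
    rw [div_le_iff₀ hTpos]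
    by_cases hT2 : T.card ≤ 2
    · have hcT : c T = 1 := h12 T (le_trans hS1 hle) hT2
      have hcS : c S = 1 := h12 S hS1 (le_trans hle hT2)
      rw [hcT, hcS, show 2 * (1 / (S.card:ℝ)) * T.card = 2 * T.card / S.card by ring,
        le_div_iff₀ hSpos]
      nlinarith
    · have hT3 : 3 ≤ T.card := by omega
      have hcT : c T = 3 := h3 T hT3
      have hT3' : (3 : ℝ) ≤ T.card := by exact_mod_cast hT3
      by_cases hS2 : S.card ≤ 2
      · have hcS : c S = 1 := h12 S hS1 hS2
        have hS2' : (S.card : ℝ) ≤ 2 := by exact_mod_cast hS2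
        rw [hcT, hcS, show 2 * (1 / (S.card:ℝ)) * T.card = 2 * T.card / S.card by ring,
          le_div_iff₀ hSpos]
        nlinarith
      · have hcS : c S = 3 := h3 S (by omega)
        rw [hcT, hcS, show 2 * (3 / (S.card:ℝ)) * T.card = 6 * T.card / S.card by ring,
          le_div_iff₀ hSpos]
        nlinarith
  · intro h
    set a : Fin n := ⟨0, by omega⟩
    set b : Fin n := ⟨1, by omega⟩
    set d : Fin n := ⟨2, by omega⟩
    have hab : a ≠ b := by simp [a, b, Fin.ext_iff]
    have had : a ≠ d := by simp [a, d, Fin.ext_iff]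
    have hbd : b ≠ d := by simp [b, d, Fin.ext_iff]
    have hS : ({a, b} : Finset (Fin n)).card = 2 := by
      rw [Finset.card_insert_of_notMem (by simp [hab]), Finset.card_singleton]
    have hT : ({b, d} : Finset (Fin n)).card = 2 := by
      rw [Finset.card_insert_of_notMem (by simp [hbd]), Finset.card_singleton]
    have hU : ({a, b} ∪ {b, d} : Finset (Fin n)) = {a, b, d} := by
      ext x; simp
    have hUcard : ({a, b, d} : Finset (Fin n)).card = 3 := by
      rw [Finset.card_insert_of_notMem (by simp [had, hab]),
        Finset.card_insert_of_notMem (by simp [hbd]), Finset.card_singleton]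
    have := h {a, b} {b, d}
    rw [hU, h3 _ (by omega), h12 _ (by omega) (by omega), h12 _ (by omega) (by omega)] at this
    linarith
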